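/- For θ > 0 and c0 > c1 > 0, the derivative of J satisfies: for every s ∈ ℂ ∖ [−1, 0], J′(s) = 0 if and only if s = s_a or s = s_b. Moreover s_a and s_b are real and satisfy s_a < −1 and s_b > 1/θ. -/

import Mathlib

/-- The complex map `J(s; c0, c1) = (c1*s + c0) * ((s+1)/s)^(1/θ)`, analytic on
`ℂ ∖ [−1, 0]`, using the principal branch of the complex power. Since
`(s+1)/s ∉ (−∞, 0]` for `s ∉ [−1, 0]`, this is the branch with
`J(s) = c1·s·(1 + O(1/s))` as `s → ∞`. -/
noncomputable def JmapC (θ c0 c1 : ℝ) (s : ℂ) : ℂ :=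
  ((c1 : ℂ) * s + (c0 : ℂ)) * ((s + 1) / s) ^ (((1 / θ : ℝ)) : ℂ)

/-- The segment `[−1, 0]` viewed as a subset of `ℂ`. -/
def seg : Set ℂ := {z : ℂ | z.im = 0 ∧ -1 ≤ z.re ∧ z.re ≤ 0}

/-- `s_a = (1−θ)/(2θ) − (1/(2θ))·√(4θ·(c0/c1) + (1−θ)²)`. -/
noncomputable def sA (θ r : ℝ) : ℝ :=
  (1 - θ) / (2 * θ) - 1 / (2 * θ) * Real.sqrt (4 * θ * r + (1 - θ) ^ 2)

/-- `s_b = (1−θ)/(2θ) + (1/(2θ))·√(4θ·(c0/c1) + (1−θ)²)`. -/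
noncomputable def sB (θ r : ℝ) : ℝ :=
  (1 - θ) / (2 * θ) + 1 / (2 * θ) * Real.sqrt (4 * θ * r + (1 - θ) ^ 2)

/-- For `θ > 0` and `c0 > c1 > 0`: `s_a < −1`, `s_b > 1/θ`, and for every
`s ∈ ℂ ∖ [−1, 0]`, `J′(s) = 0` iff `s = s_a` or `s = s_b`. -/
theorem stmt2 (θ c0 c1 : ℝ) (hθ : 0 < θ) (hc1 : 0 < c1) (hc01 : c1 < c0) :
    (sA θ (c0 / c1) < -1 ∧ 1 / θ < sB θ (c0 / c1)) ∧
    ∀ s : ℂ, s ∉ seg →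
      (deriv (JmapC θ c0 c1) s = 0 ↔
        s = ((sA θ (c0 / c1) : ℝ) : ℂ) ∨ s = ((sB θ (c0 / c1) : ℝ) : ℂ)) := by
  have hθ' : θ ≠ 0 := ne_of_gt hθ
  have hc1' : c1 ≠ 0 := ne_of_gt hc1
  set r : ℝ := c0 / c1 with hrdef
  have hr1 : 1 < r := (one_lt_div hc1).mpr hc01
  have hD : 0 < 4 * θ * r + (1 - θ) ^ 2 := by nlinarith
  have hsqD : Real.sqrt (4 * θ * r + (1 - θ) ^ 2) ^ 2 = 4 * θ * r + (1 - θ) ^ 2 :=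
    Real.sq_sqrt hD.le
  have hsqgt : 1 + θ < Real.sqrt (4 * θ * r + (1 - θ) ^ 2) := by
    have h1 : (1 + θ) = Real.sqrt ((1 + θ) ^ 2) := by
      rw [Real.sqrt_sq (by positivity)]
    rw [h1]
    apply Real.sqrt_lt_sqrt (by positivity)
    nlinarith
  have h2θ : (0:ℝ) < 2 * θ := by linarith
  have hAval : sA θ r = ((1 - θ) - Real.sqrt (4 * θ * r + (1 - θ) ^ 2)) / (2 * θ) := by
    unfold sA; field_simp
  have hBval : sB θ r = ((1 - θ) + Real.sqrt (4 * θ * r + (1 - θ) ^ 2)) / (2 * θ) := by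
    unfold sB; field_simp
  have hA : sA θ r < -1 := by
    rw [hAval, div_lt_iff₀ h2θ]; nlinarith
  have hB : 1 / θ < sB θ r := by
    rw [hBval, lt_div_iff₀ h2θ]
    have h2 : 1 / θ * (2 * θ) = 2 := by field_simp
    rw [h2]; linarith
  have hsum : θ * (sA θ r + sB θ r) = 1 - θ := by
    unfold sA sB; field_simp; ring
  have hprod : c1 * (θ * (sA θ r * sB θ r)) = -c0 := by
    have h : θ * (sA θ r * sB θ r) = -r := by
      unfold sA sB
      field_simp
      nlinarith [hsqD, Real.sq_sqrt (show (0:ℝ) ≤ θ * 4 * r + (1 - θ) ^ 2 by nlinarith)]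
    rw [h, hrdef]; field_simp
  refine ⟨⟨hA, hB⟩, ?_⟩
  intro s hs
  have hs0 : s ≠ 0 := by
    intro h; exact hs (by rw [h]; exact ⟨rfl, by norm_num, le_refl 0⟩)
  have hs1 : s + 1 ≠ 0 := by
    intro h
    have : s = -1 := by linear_combination h
    exact hs (by rw [this]; exact ⟨by simp, by simp, by norm_num⟩)
  have hw0 : (s + 1) / s ≠ 0 := div_ne_zero hs1 hs0
  have hslit : (s + 1) / s ∈ Complex.slitPlane := by
    rw [Complex.mem_slitPlane_iff]
    by_cases him : s.im = 0
    · left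
      have hre : s.re < -1 ∨ 0 < s.re := by
        by_contra h
        push_neg at h
        exact hs ⟨him, by linarith [h.1], h.2⟩
      have hsx : s = (s.re : ℂ) := Complex.ext rfl (by simp [him])
      have h5 : (s + 1) / s = (((s.re + 1) / s.re : ℝ) : ℂ) := by
        conv_lhs => rw [hsx]
        push_cast; ring
      rw [h5, Complex.ofReal_re]
      rcases hre with h | h
      · exact div_pos_of_neg_of_neg (by linarith) (by linarith)
      · exact div_pos (by linarith) h
    · right
      have heq : (s + 1) / s = 1 + s⁻¹ := by field_simp
      rw [heq, Complex.add_im, Complex.one_im, Complex.inv_im, zero_add]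
      have hns : Complex.normSq s > 0 := Complex.normSq_pos.mpr hs0
      intro h
      have : -s.im = 0 := by
        field_simp at h
        simpa using h
      exact him (by linarith [neg_eq_zero.mp this])
  -- derivative computation
  set c : ℂ := ((1 / θ : ℝ) : ℂ) with hc
  have hcθ : c = 1 / (θ : ℂ) := by rw [hc]; push_cast; ring
  have hθC : (θ : ℂ) ≠ 0 := by exact_mod_cast hθ'
  have hc1C : (c1 : ℂ) ≠ 0 := by exact_mod_cast hc1'
  have hdiv : HasDerivAt (fun z : ℂ => (z + 1) / z) ((1 * s - (s + 1) * 1) / s ^ 2) s :=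
    ((hasDerivAt_id s).add_const 1).div (hasDerivAt_id s) hs0
  have hcpow : HasDerivAt (fun z : ℂ => ((z + 1) / z) ^ c)
      (c * ((s + 1) / s) ^ (c - 1) * ((1 * s - (s + 1) * 1) / s ^ 2)) s :=
    hdiv.cpow_const hslit
  have hlin : HasDerivAt (fun z : ℂ => (c1 : ℂ) * z + (c0 : ℂ)) (c1 : ℂ) s := by
    simpa using ((hasDerivAt_id s).const_mul (c1 : ℂ)).add_const (c0 : ℂ)
  have hJ : HasDerivAt (JmapC θ c0 c1)
      ((c1 : ℂ) * (((s + 1) / s) ^ c) +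
        ((c1 : ℂ) * s + (c0 : ℂ)) *
          (c * ((s + 1) / s) ^ (c - 1) * ((1 * s - (s + 1) * 1) / s ^ 2))) s := by
    exact hlin.mul hcpow
  have hderiv := hJ.deriv
  set u : ℂ := ((s + 1) / s) ^ (c - 1) with hu
  have hu0 : u ≠ 0 := by
    rw [hu]
    intro h
    exact hw0 ((Complex.cpow_eq_zero_iff _ _).mp h).1
  have hwc : ((s + 1) / s) ^ c = u * ((s + 1) / s) := by
    have h := Complex.cpow_add (c - 1) 1 hw0
    rw [Complex.cpow_one] at h
    rw [show c = c - 1 + 1 from by ring, h, hu]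
  set A : ℂ := ((sA θ r : ℝ) : ℂ) with hAc
  set B : ℂ := ((sB θ r : ℝ) : ℂ) with hBc
  have hsumC : (θ : ℂ) * (A + B) = 1 - (θ : ℂ) := by
    rw [hAc, hBc]; exact_mod_cast hsum
  have hprodC : (c1 : ℂ) * ((θ : ℂ) * (A * B)) = -(c0 : ℂ) := by
    rw [hAc, hBc]; exact_mod_cast hprod
  have hpoly : (c1 : ℂ) * ((s + 1) * s) * (θ : ℂ) - ((c1 : ℂ) * s + (c0 : ℂ)) =
      (c1 : ℂ) * (θ : ℂ) * ((s - A) * (s - B)) := by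
    linear_combination ((c1 : ℂ) * s) * hsumC - hprodC
  have h2 : (c1 : ℂ) * ((s + 1) / s)
      + ((c1 : ℂ) * s + (c0 : ℂ)) * (1 / (θ : ℂ) * ((1 * s - (s + 1) * 1) / s ^ 2)) =
      ((c1 : ℂ) * ((s + 1) * s) * (θ : ℂ) - ((c1 : ℂ) * s + (c0 : ℂ))) / ((θ : ℂ) * s ^ 2) := by
    field_simp
    ring
  have h3 : (c1 : ℂ) * (θ : ℂ) * ((s - A) * (s - B)) / ((θ : ℂ) * s ^ 2) =
      (c1 : ℂ) * ((s - A) * (s - B)) / s ^ 2 := by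
    rw [show (c1 : ℂ) * (θ : ℂ) * ((s - A) * (s - B))
        = (θ : ℂ) * ((c1 : ℂ) * ((s - A) * (s - B))) from by ring,
      mul_div_mul_left _ _ hθC]
  have hkey : deriv (JmapC θ c0 c1) s = u * ((c1 : ℂ) * ((s - A) * (s - B)) / s ^ 2) := by
    rw [hderiv, hwc, hcθ]
    rw [show (c1 : ℂ) * (u * ((s + 1) / s))
        + ((c1 : ℂ) * s + (c0 : ℂ)) * (1 / (θ : ℂ) * u * ((1 * s - (s + 1) * 1) / s ^ 2))
        = u * ((c1 : ℂ) * ((s + 1) / s)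
          + ((c1 : ℂ) * s + (c0 : ℂ)) * (1 / (θ : ℂ) * ((1 * s - (s + 1) * 1) / s ^ 2)))
        from by ring]
    rw [h2, hpoly, h3]
  rw [hkey]
  constructor
  · intro h
    rcases mul_eq_zero.mp h with h | h
    · exact absurd h hu0
    rw [div_eq_zero_iff] at h
    rcases h with h | h
    · rcases mul_eq_zero.mp h with h | h
      · exact absurd h hc1C
      · rcases mul_eq_zero.mp h with h | h
        · exact Or.inl (sub_eq_zero.mp h)
        · exact Or.inr (sub_eq_zero.mp h)
    · exact absurd ((pow_eq_zero_iff two_ne_zero).mp h) hs0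
  · rintro (h | h) <;> rw [h] <;> simp
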